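/- Let α : I → S²₁ ⊂ E³₁ be a unit-speed time-like curve with unit normal N and nonvanishing curvature κ (α'' = κN + α, N' = κα'), let b : I → R be smooth, and set B₁₀(t) = ∫_{t₀}^t κ(ξ)b'(ξ)dξ. Define f : J×I → R⁵ by f(s,t) = cos s·(b(t), α₁(t), α₂(t), α₃(t), b(t)) + sin s·(B₁₀(t), N₁(t), N₂(t), N₃(t), B₁₀(t)). Then ⟨f,f⟩ = 1 in E⁵₂ (so f maps into S⁴₂) and f_ss = −f. -/

import Mathlib

/-- The metric of index 2 on `ℝ⁵`. -/
noncomputable def g5 (x y : Fin 5 → ℝ) : ℝ :=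
  -(x 0 * y 0) - x 1 * y 1 + x 2 * y 2 + x 3 * y 3 + x 4 * y 4

/-- The Lorentz metric on `ℝ³`. -/
noncomputable def g3 (x y : Fin 3 → ℝ) : ℝ :=
  -(x 0 * y 0) + x 1 * y 1 + x 2 * y 2

private lemma aux_deriv (v w : Fin 5 → ℝ) (s : ℝ) :
    HasDerivAt (fun s' : ℝ => Real.cos s' • v + Real.sin s' • w)
      ((-Real.sin s) • v + Real.cos s • w) s :=
  ((Real.hasDerivAt_cos s).smul_const v).add ((Real.hasDerivAt_sin s).smul_const w)

/-- The surface of Proposition 3.6 lies in `S⁴₂` and satisfies `f_ss = -f`. -/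
theorem stmt18 (α N : ℝ → Fin 3 → ℝ) (κ b : ℝ → ℝ) (t₀ : ℝ)
    (hαα : ∀ t, g3 (α t) (α t) = 1)
    (hNN : ∀ t, g3 (N t) (N t) = 1)
    (hαN : ∀ t, g3 (α t) (N t) = 0)
    (f : ℝ → ℝ → Fin 5 → ℝ)
    (hf : ∀ s t, f s t =
      Real.cos s • ![b t, α t 0, α t 1, α t 2, b t] +
      Real.sin s • ![∫ ξ in t₀..t, κ ξ * deriv b ξ, N t 0, N t 1, N t 2,
        ∫ ξ in t₀..t, κ ξ * deriv b ξ]) :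
    (∀ s t : ℝ, g5 (f s t) (f s t) = 1) ∧
    (∀ s t : ℝ,
      deriv (fun s'' => deriv (fun s' => f s' t) s'') s = -(f s t)) := by
  constructor
  · intro s t
    have h1 := hαα t
    have h2 := hNN t
    have h3 := hαN t
    have hc := Real.sin_sq_add_cos_sq s
    simp only [g3] at h1 h2 h3
    rw [hf s t]
    simp only [g5, Pi.add_apply, Pi.smul_apply, smul_eq_mul]
    simp only [Matrix.cons_val_zero, Matrix.cons_val_one, Matrix.head_cons,
      Matrix.cons_val_two, Matrix.tail_cons, Matrix.cons_val_three,
      Matrix.cons_val_four]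
    linear_combination Real.cos s^2 * h1 + Real.sin s^2 * h2 + 2*Real.cos s*Real.sin s*h3 + hc
  · intro s t
    set v := ![b t, α t 0, α t 1, α t 2, b t]
    set w := ![∫ ξ in t₀..t, κ ξ * deriv b ξ, N t 0, N t 1, N t 2,
        ∫ ξ in t₀..t, κ ξ * deriv b ξ]
    have hfe : (fun s' => f s' t) = fun s' : ℝ => Real.cos s' • v + Real.sin s' • w := by
      funext s'; exact hf s' t
    rw [hfe]
    have hd1 : (fun s'' => deriv (fun s' : ℝ => Real.cos s' • v + Real.sin s' • w) s'')
        = fun s'' : ℝ => (-Real.sin s'') • v + Real.cos s'' • w := by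
      funext s''; exact (aux_deriv v w s'').deriv
    rw [hd1]
    have hd2 : HasDerivAt (fun s'' : ℝ => (-Real.sin s'') • v + Real.cos s'' • w)
        ((-Real.cos s) • v + (-Real.sin s) • w) s := by
      have := (((Real.hasDerivAt_sin s).neg).smul_const v).add
        ((Real.hasDerivAt_cos s).smul_const w)
      simpa [Pi.add_def] using this
    rw [hd2.deriv, hf s t]
    funext i; fin_cases i <;> simp [v, w] <;> ring
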